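/- For a homogeneous polynomial p of degree m on ℝ^d, define the (κ=0) Hermite polynomial H_p(x) = (−1/2)^m e^{‖x‖²} p(∂) e^{−‖x‖²}. Then H_p(x) = Σ_{j=0}^{⌊m/2⌋} ((−1)^j/(2^{2j} j!)) (Δ^j p)(x). In particular, if p is harmonic then H_p = p. -/

import Mathlib

open Finset MvPolynomial Real

noncomputable section

/-- Partial derivative in direction `l` on Euclidean space. -/
def pd (d : ℕ) (l : Fin d) (f : EuclideanSpace ℝ (Fin d) → ℝ) :
    EuclideanSpace ℝ (Fin d) → ℝ :=
  fun x => fderiv ℝ f x (EuclideanSpace.single l 1)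

/-- Iterated partial derivative for a multi-index `s`. -/
def Dmulti (d : ℕ) (s : Fin d →₀ ℕ) (f : EuclideanSpace ℝ (Fin d) → ℝ) :
    EuclideanSpace ℝ (Fin d) → ℝ :=
  (List.finRange d).foldr (fun l g => (pd d l)^[s l] g) f

/-- The constant-coefficient differential operator `p(∂)`. -/
def polyOp (d : ℕ) (p : MvPolynomial (Fin d) ℝ) (f : EuclideanSpace ℝ (Fin d) → ℝ) :
    EuclideanSpace ℝ (Fin d) → ℝ :=
  fun x => ∑ s ∈ p.support, p.coeff s * Dmulti d s f x

/-- The Laplacian on functions on Euclidean space. -/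
def lap (d : ℕ) (f : EuclideanSpace ℝ (Fin d) → ℝ) : EuclideanSpace ℝ (Fin d) → ℝ :=
  fun x => ∑ l : Fin d, pd d l (pd d l f) x

/-- The formal Laplacian on polynomials. -/
def lapPoly (d : ℕ) (p : MvPolynomial (Fin d) ℝ) : MvPolynomial (Fin d) ℝ :=
  ∑ l : Fin d, pderiv l (pderiv l p)

/-- Evaluation of a polynomial at a point of Euclidean space. -/
def peval (d : ℕ) (p : MvPolynomial (Fin d) ℝ) (x : EuclideanSpace ℝ (Fin d)) : ℝ :=
  MvPolynomial.eval (fun l => x l) p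

/-- The radial operator `(1/r) d/dr`. -/
def radOp (g : ℝ → ℝ) : ℝ → ℝ := fun r => deriv g r / r

def pderivCLM (d : ℕ) (q : MvPolynomial (Fin d) ℝ) (x : EuclideanSpace ℝ (Fin d)) :
    EuclideanSpace ℝ (Fin d) →L[ℝ] ℝ :=
  ∑ l : Fin d, peval d (pderiv l q) x • (EuclideanSpace.proj l : EuclideanSpace ℝ (Fin d) →L[ℝ] ℝ)
theorem hasFDerivAt_peval (q : MvPolynomial (Fin d) ℝ) (x : EuclideanSpace ℝ (Fin d)) :
    HasFDerivAt (peval d q) (pderivCLM d q x) x := by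
  induction q using MvPolynomial.induction_on with
  | C a =>
    have : peval d (C a : MvPolynomial (Fin d) ℝ) = fun _ => a := by
      funext y; simp [peval]
    rw [this]
    have h0 : pderivCLM d (C a : MvPolynomial (Fin d) ℝ) x = 0 := by
      simp [pderivCLM, peval]
    rw [h0]; exact hasFDerivAt_const a x
  | add p q hp hq =>
    have : peval d (p + q) = fun y => peval d p y + peval d q y := by
      funext y; simp [peval]
    rw [this]
    have h0 : pderivCLM d (p + q) x = pderivCLM d p x + pderivCLM d q x := by
      simp [pderivCLM, smul_add, add_smul, Finset.sum_add_distrib, peval]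
    rw [h0]; exact hp.add hq
  | mul_X p i hp =>
    have : peval d (p * X i) = fun y => peval d p y * y i := by
      funext y; simp [peval]
    rw [this]
    have hxi : HasFDerivAt (fun y : EuclideanSpace ℝ (Fin d) => y i)
        (EuclideanSpace.proj i : EuclideanSpace ℝ (Fin d) →L[ℝ] ℝ) x :=
      (EuclideanSpace.proj i : EuclideanSpace ℝ (Fin d) →L[ℝ] ℝ).hasFDerivAt
    have h := hp.mul' hxi
    have h0 : pderivCLM d (p * X i) x
        = (x i) • pderivCLM d p x + peval d p x • (EuclideanSpace.proj i : EuclideanSpace ℝ (Fin d) →L[ℝ] ℝ) := by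
      have step : ∀ l : Fin d, peval d ((pderiv l) p * X i + p * Pi.single (M := fun _ : Fin d => MvPolynomial (Fin d) ℝ) l 1 i) x • (EuclideanSpace.proj l : EuclideanSpace ℝ (Fin d) →L[ℝ] ℝ)
          = x i • peval d ((pderiv l) p) x • (EuclideanSpace.proj l : EuclideanSpace ℝ (Fin d) →L[ℝ] ℝ)
            + (if l = i then peval d p x • (EuclideanSpace.proj i : EuclideanSpace ℝ (Fin d) →L[ℝ] ℝ) else 0) := by
        intro l
        by_cases hl : l = i
        · subst hl; simp [peval, add_smul, smul_smul, mul_comm]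
        · simp [Pi.single_apply, hl, peval, smul_smul, mul_comm]
      simp only [pderivCLM, pderiv_mul, pderiv_X]
      rw [Finset.sum_congr rfl (fun l _ => step l), Finset.sum_add_distrib,
        Finset.sum_ite_eq' Finset.univ i
          (fun _ => peval d p x • (EuclideanSpace.proj i : EuclideanSpace ℝ (Fin d) →L[ℝ] ℝ))]
      simp [Finset.smul_sum]
    rw [h0]
    refine h.congr_fderiv ?_
    ext v
    simp [ContinuousLinearMap.smulRight_apply]
    ring


theorem pderivCLM_single (q : MvPolynomial (Fin d) ℝ) (x : EuclideanSpace ℝ (Fin d)) (l : Fin d) :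
    pderivCLM d q x (EuclideanSpace.single l 1) = peval d (pderiv l q) x := by
  simp [pderivCLM, EuclideanSpace.single_apply, Finset.sum_ite_eq', mul_ite]

/-- conjugated function -/
def Econj (d : ℕ) (w q : MvPolynomial (Fin d) ℝ) (x : EuclideanSpace ℝ (Fin d)) : ℝ :=
  peval d q x * Real.exp (peval d w x)

theorem pd_Econj (w q : MvPolynomial (Fin d) ℝ) (l : Fin d) :
    pd d l (Econj d w q) = Econj d w (pderiv l q + pderiv l w * q) := by
  funext x
  have hq := hasFDerivAt_peval q x
  have hw := (hasFDerivAt_peval w x).exp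
  have h := hq.mul' hw
  have hd : pd d l (Econj d w q) x
      = (peval d q x • (Real.exp (peval d w x) • pderivCLM d w x)
          + (pderivCLM d q x).smulRight (Real.exp (peval d w x)))
        (EuclideanSpace.single l 1) := by
    rw [pd, show Econj d w q = (peval d q * fun y => rexp (peval d w y)) from rfl, h.fderiv]
    rfl
  rw [hd]
  simp only [ContinuousLinearMap.add_apply, ContinuousLinearMap.smul_apply,
    ContinuousLinearMap.smulRight_apply, pderivCLM_single, smul_eq_mul]
  simp only [Econj, peval, map_add, map_mul, MvPolynomial.eval_add, MvPolynomial.eval_mul]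
  ring

/-- the Gaussian exponent polynomial -/
def wP (d : ℕ) : MvPolynomial (Fin d) ℝ := -(∑ l : Fin d, X l ^ 2)

/-- conjugated derivative operator -/
def Tl (d : ℕ) (l : Fin d) (q : MvPolynomial (Fin d) ℝ) : MvPolynomial (Fin d) ℝ :=
  pderiv l q + pderiv l (wP d) * q

def Tpow (d : ℕ) (s : Fin d →₀ ℕ) (q : MvPolynomial (Fin d) ℝ) : MvPolynomial (Fin d) ℝ :=
  (List.finRange d).foldr (fun l r => (Tl d l)^[s l] r) q

theorem pderiv_wP (l : Fin d) : pderiv l (wP d) = -(2 * X l) := by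
  have : pderiv l (∑ k : Fin d, (X k : MvPolynomial (Fin d) ℝ) ^ 2) = 2 * X l := by
    rw [map_sum]
    rw [Finset.sum_eq_single l]
    · rw [pderiv_pow]; simp
    · intro k _ hk
      rw [pderiv_pow]; simp [pderiv_X_of_ne (show k ≠ l from hk)]
    · simp
  simp [wP, this]

theorem Tl_eq (l : Fin d) (q : MvPolynomial (Fin d) ℝ) :
    Tl d l q = pderiv l q - 2 * X l * q := by
  rw [Tl, pderiv_wP]; ring

theorem pderiv_comm (i j : Fin d) (q : MvPolynomial (Fin d) ℝ) :
    pderiv i (pderiv j q) = pderiv j (pderiv i q) := by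
  induction q using MvPolynomial.induction_on' with
  | monomial s a =>
    simp only [pderiv_monomial]
    rcases eq_or_ne i j with rfl | hij
    · rfl
    · have h1 : (s - Finsupp.single j 1 : Fin d →₀ ℕ) i = s i := by
        rw [Finsupp.tsub_apply, Finsupp.single_eq_of_ne hij, tsub_zero]
      have h2 : (s - Finsupp.single i 1 : Fin d →₀ ℕ) j = s j := by
        rw [Finsupp.tsub_apply, Finsupp.single_eq_of_ne (Ne.symm hij), tsub_zero]
      have h3 : s - Finsupp.single j 1 - Finsupp.single i 1
          = s - Finsupp.single i 1 - Finsupp.single j 1 := by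
        ext k
        simp only [Finsupp.tsub_apply, Finsupp.single_apply]
        split_ifs <;> omega
      rw [h1, h2, h3]; ring_nf
  | add p q hp hq => simp [map_add, hp, hq]

theorem Tl_comm (l k : Fin d) (q : MvPolynomial (Fin d) ℝ) :
    Tl d l (Tl d k q) = Tl d k (Tl d l q) := by
  have h2 : ∀ i : Fin d, pderiv i (2 : MvPolynomial (Fin d) ℝ) = 0 := by
    intro i
    rw [(map_ofNat (C : ℝ →+* MvPolynomial (Fin d) ℝ) 2).symm, pderiv_C]
  simp only [Tl_eq, map_sub, pderiv_mul, pderiv_comm l k q, h2]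
  rcases eq_or_ne l k with rfl | hlk
  · ring
  · rw [pderiv_X_of_ne hlk, pderiv_X_of_ne (Ne.symm hlk)]; ring

theorem Tl_iter_comm (l k : Fin d) (n : ℕ) (q : MvPolynomial (Fin d) ℝ) :
    Tl d l ((Tl d k)^[n] q) = (Tl d k)^[n] (Tl d l q) := by
  induction n generalizing q with
  | zero => rfl
  | succ n ih => rw [Function.iterate_succ_apply, Function.iterate_succ_apply, ih, Tl_comm]

theorem Tpow_foldr_comm (l : Fin d) (s : Fin d →₀ ℕ) (L : List (Fin d))
    (q : MvPolynomial (Fin d) ℝ) :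
    Tl d l (L.foldr (fun i r => (Tl d i)^[s i] r) q)
      = L.foldr (fun i r => (Tl d i)^[s i] r) (Tl d l q) := by
  induction L with
  | nil => rfl
  | cons i tl ih => simp only [List.foldr_cons, Tl_iter_comm, ih]

theorem foldr_congr (s s' : Fin d →₀ ℕ) (L : List (Fin d)) (h : ∀ i ∈ L, s i = s' i)
    (q : MvPolynomial (Fin d) ℝ) :
    L.foldr (fun i r => (Tl d i)^[s i] r) q = L.foldr (fun i r => (Tl d i)^[s' i] r) q := by
  induction L with
  | nil => rfl
  | cons i tl ih =>
    simp only [List.foldr_cons, h i (List.mem_cons_self),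
      ih (fun j hj => h j (List.mem_cons_of_mem i hj))]

theorem Tpow_key (l : Fin d) (s : Fin d →₀ ℕ) (q : MvPolynomial (Fin d) ℝ) :
    ∀ L : List (Fin d), l ∈ L → L.Nodup →
      L.foldr (fun i r => (Tl d i)^[(s + Finsupp.single l 1 : Fin d →₀ ℕ) i] r) q
        = Tl d l (L.foldr (fun i r => (Tl d i)^[s i] r) q) := by
  intro L
  induction L with
  | nil => intro h; exact absurd h List.not_mem_nil
  | cons i tl ih =>
    intro hmem hnd
    rcases List.mem_cons.mp hmem with rfl | htl
    · have hnotl : l ∉ tl := (List.nodup_cons.mp hnd).1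
      simp only [List.foldr_cons]
      rw [foldr_congr (s + Finsupp.single l 1) s tl
        (fun j hj => by
          have hne : ¬ l = j := fun h => hnotl (h ▸ hj)
          simp [Finsupp.add_apply, Finsupp.single_apply, hne])]
      have hval : (s + Finsupp.single l 1 : Fin d →₀ ℕ) l = s l + 1 := by
        simp [Finsupp.add_apply, Finsupp.single_apply]
      rw [hval, Function.iterate_succ_apply']
    · have hne : i ≠ l := by
        rintro rfl; exact (List.nodup_cons.mp hnd).1 htl
      simp only [List.foldr_cons]
      rw [ih htl (List.nodup_cons.mp hnd).2]
      have hval : (s + Finsupp.single l 1 : Fin d →₀ ℕ) i = s i := by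
        simp [Finsupp.add_apply, Finsupp.single_apply, (Ne.symm hne : ¬ l = i)]
      rw [hval, Tl_iter_comm]

theorem Tpow_add_single (l : Fin d) (s : Fin d →₀ ℕ) (q : MvPolynomial (Fin d) ℝ) :
    Tpow d (s + Finsupp.single l 1) q = Tl d l (Tpow d s q) :=
  Tpow_key l s q (List.finRange d) (List.mem_finRange l) (List.nodup_finRange d)

theorem C_two : (C (2:ℝ) : MvPolynomial (Fin d) ℝ) = 2 := map_ofNat _ 2

theorem lapPoly_add (p q : MvPolynomial (Fin d) ℝ) :
    lapPoly d (p + q) = lapPoly d p + lapPoly d q := by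
  simp [lapPoly, map_add, Finset.sum_add_distrib]

theorem lapPoly_C_mul (c : ℝ) (p : MvPolynomial (Fin d) ℝ) :
    lapPoly d (C c * p) = C c * lapPoly d p := by
  simp [lapPoly, pderiv_C_mul, Finset.mul_sum]

theorem lapPoly_zero : lapPoly d (0 : MvPolynomial (Fin d) ℝ) = 0 := by simp [lapPoly]

theorem lapPoly_iter_zero (j : ℕ) : (lapPoly d)^[j] (0 : MvPolynomial (Fin d) ℝ) = 0 :=
  Function.iterate_fixed lapPoly_zero j

theorem lapPoly_iter_add (j : ℕ) (p q : MvPolynomial (Fin d) ℝ) :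
    (lapPoly d)^[j] (p + q) = (lapPoly d)^[j] p + (lapPoly d)^[j] q := by
  induction j generalizing p q with
  | zero => rfl
  | succ j ih => simp [Function.iterate_succ_apply, lapPoly_add, ih]

theorem lapPoly_iter_C_mul (j : ℕ) (c : ℝ) (p : MvPolynomial (Fin d) ℝ) :
    (lapPoly d)^[j] (C c * p) = C c * (lapPoly d)^[j] p := by
  induction j generalizing p with
  | zero => rfl
  | succ j ih => simp [Function.iterate_succ_apply, lapPoly_C_mul, ih]

theorem pderiv_lapPoly (l : Fin d) (q : MvPolynomial (Fin d) ℝ) :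
    pderiv l (lapPoly d q) = lapPoly d (pderiv l q) := by
  simp only [lapPoly, map_sum]
  exact Finset.sum_congr rfl fun k _ => by rw [pderiv_comm l k, pderiv_comm l k]

theorem pderiv_lapPoly_iter (l : Fin d) (j : ℕ) (q : MvPolynomial (Fin d) ℝ) :
    pderiv l ((lapPoly d)^[j] q) = (lapPoly d)^[j] (pderiv l q) := by
  induction j generalizing q with
  | zero => rfl
  | succ j ih => rw [Function.iterate_succ_apply, Function.iterate_succ_apply, ih, pderiv_lapPoly]

theorem lapPoly_X_mul (l : Fin d) (q : MvPolynomial (Fin d) ℝ) :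
    lapPoly d (X l * q) = X l * lapPoly d q + 2 * pderiv l q := by
  simp only [lapPoly, pderiv_mul]
  have step : ∀ k : Fin d,
      pderiv k (pderiv k (X l) * q + X l * pderiv k q)
        = X l * pderiv k (pderiv k q)
          + (if k = l then 2 * pderiv l q else 0) := by
    intro k
    rcases eq_or_ne k l with rfl | hkl
    · simp [pderiv_mul]
      ring
    · simp only [pderiv_X_of_ne (Ne.symm hkl), zero_mul, zero_add, pderiv_mul,
        pderiv_X_of_ne (Ne.symm hkl), if_neg hkl]
      ring
  rw [Finset.sum_congr rfl fun k _ => step k, Finset.sum_add_distrib,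
    Finset.sum_ite_eq' Finset.univ l (fun _ => 2 * pderiv l q)]
  simp [Finset.mul_sum]

theorem lapPoly_iter_X_mul (j : ℕ) (l : Fin d) (q : MvPolynomial (Fin d) ℝ) :
    (lapPoly d)^[j + 1] (X l * q)
      = X l * (lapPoly d)^[j + 1] q + C (2 * ((j:ℝ) + 1)) * pderiv l ((lapPoly d)^[j] q) := by
  induction j generalizing q with
  | zero =>
    rw [zero_add, Function.iterate_one, Function.iterate_zero, id_eq, lapPoly_X_mul,
      show (2 * (((0:ℕ):ℝ) + 1)) = 2 by norm_num, C_two]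
  | succ j ih =>
    rw [Function.iterate_succ_apply, lapPoly_X_mul, lapPoly_iter_add,
      ← C_two, lapPoly_iter_C_mul, ih (lapPoly d q), C_two]
    rw [← Function.iterate_succ_apply (lapPoly d) (j+1) q]
    rw [show (lapPoly d)^[j] (lapPoly d q) = (lapPoly d)^[j+1] q from
      (Function.iterate_succ_apply (lapPoly d) j q).symm]
    rw [show (lapPoly d)^[j+1] (pderiv l q) = pderiv l ((lapPoly d)^[j+1] q) from
      (pderiv_lapPoly_iter l (j+1) q).symm]
    rw [← C_two, add_assoc, ← add_mul, ← C_add,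
      show (2 * ((j:ℝ)+1) + 2) = 2 * (((j:ℕ)+1:ℕ):ℝ) + 2 * 1 by push_cast; ring]
    push_cast
    ring_nf
    rw [show (1+j).succ = 2+j from by omega]

theorem sum_sub_single (m : Fin d →₀ ℕ) (i : Fin d) (h : m i ≠ 0) :
    ((m - Finsupp.single i 1 : Fin d →₀ ℕ).sum fun _ n => n) + 1 = m.sum fun _ n => n := by
  have hle : Finsupp.single i 1 ≤ m := Finsupp.single_le_iff.mpr (Nat.one_le_iff_ne_zero.mpr h)
  conv_rhs => rw [← tsub_add_cancel_of_le hle]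
  rw [Finsupp.sum_add_index' (fun _ => rfl) (fun _ _ _ => rfl), Finsupp.sum_single_index rfl]

theorem pderiv_as_sum (i : Fin d) (q : MvPolynomial (Fin d) ℝ) :
    pderiv i q = ∑ m ∈ q.support,
      monomial (m - Finsupp.single i 1) (q.coeff m * (m i : ℝ)) := by
  conv_lhs => rw [q.as_sum]
  rw [map_sum]
  exact Finset.sum_congr rfl fun m _ => pderiv_monomial

theorem td_pderiv_le (i : Fin d) (q : MvPolynomial (Fin d) ℝ) :
    (pderiv i q).totalDegree ≤ q.totalDegree - 1 := by
  rw [pderiv_as_sum]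
  refine le_trans (totalDegree_finset_sum _ _) (Finset.sup_le fun m hm => ?_)
  rcases eq_or_ne (m i) 0 with h0 | h0
  · simp [h0]
  · rcases eq_or_ne (q.coeff m * (m i : ℝ)) 0 with hc | hc
    · simp [hc]
    · rw [totalDegree_monomial _ hc]
      have h1 := sum_sub_single m i h0
      have h2 : (m.sum fun _ n => n) ≤ q.totalDegree := le_totalDegree hm
      omega

theorem pderiv_eq_zero_of_td_zero (i : Fin d) (q : MvPolynomial (Fin d) ℝ)
    (h : q.totalDegree = 0) : pderiv i q = 0 := by
  rw [pderiv_as_sum]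
  refine Finset.sum_eq_zero fun m hm => ?_
  rw [(MvPolynomial.totalDegree_eq_zero_iff (Fin d) q).mp h m hm i]
  simp

theorem lap_eq_zero_of_td_le_one (q : MvPolynomial (Fin d) ℝ) (h : q.totalDegree ≤ 1) :
    lapPoly d q = 0 := by
  refine Finset.sum_eq_zero fun k _ => ?_
  refine pderiv_eq_zero_of_td_zero k _ ?_
  have := td_pderiv_le k q
  omega

theorem td_lap_le (q : MvPolynomial (Fin d) ℝ) :
    (lapPoly d q).totalDegree ≤ q.totalDegree - 2 := by
  refine le_trans (totalDegree_finset_sum _ _) (Finset.sup_le fun k _ => ?_)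
  have h1 := td_pderiv_le k (pderiv k q)
  have h2 := td_pderiv_le k q
  omega

theorem lap_iter_vanish : ∀ (j : ℕ) (q : MvPolynomial (Fin d) ℝ),
    q.totalDegree < 2 * j → (lapPoly d)^[j] q = 0 := by
  intro j
  induction j with
  | zero => intro q h; omega
  | succ j ih =>
    intro q h
    rcases le_or_gt q.totalDegree 1 with h1 | h1
    · rw [Function.iterate_succ_apply, lap_eq_zero_of_td_le_one q h1, lapPoly_iter_zero]
    · rw [Function.iterate_succ_apply]
      refine ih _ ?_
      have := td_lap_le (d := d) q
      omega

def cf (j : ℕ) : ℝ := (-1)^j / (2^(2*j) * (Nat.factorial j : ℝ))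

theorem cf_zero : cf 0 = 1 := by simp [cf]

theorem cf_succ (j : ℕ) : cf (j+1) * (2 * ((j:ℝ)+1)) = -(1/2) * cf j := by
  have h2 : (Nat.factorial j : ℝ) ≠ 0 := Nat.cast_ne_zero.mpr (Nat.factorial_ne_zero j)
  have h3 : (2:ℝ)^(2*j) ≠ 0 := by positivity
  have h4 : ((j:ℝ)+1) ≠ 0 := by positivity
  simp only [cf, Nat.factorial_succ, show 2*(j+1) = 2*j+2 by omega, pow_add, pow_succ]
  push_cast
  field_simp

def Spoly (d n : ℕ) (q : MvPolynomial (Fin d) ℝ) : MvPolynomial (Fin d) ℝ :=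
  ∑ j ∈ Finset.range (n+1), C (cf j) * (lapPoly d)^[j] q

theorem pderiv_Spoly (l : Fin d) (n : ℕ) (q : MvPolynomial (Fin d) ℝ) :
    pderiv l (Spoly d n q) = ∑ i ∈ Finset.range (n+1), C (cf i) * pderiv l ((lapPoly d)^[i] q) := by
  rw [Spoly, map_sum]
  exact Finset.sum_congr rfl fun i _ => pderiv_C_mul

theorem Spoly_X_mul (n : ℕ) (l : Fin d) (q : MvPolynomial (Fin d) ℝ)
    (hq : q.totalDegree ≤ n) :
    Spoly d (n+1) (X l * q) = X l * Spoly d n q - C (1/2 : ℝ) * pderiv l (Spoly d n q) := by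
  have hvanish : (lapPoly d)^[n+1] q = 0 := lap_iter_vanish (n+1) q (by omega)
  have hsum1 : (∑ i ∈ Finset.range (n+1), C (cf (i+1)) * (lapPoly d)^[i+1] q) + C (cf 0) * q
      = Spoly d n q := by
    have h1 : (∑ i ∈ Finset.range (n+1), C (cf (i+1)) * (lapPoly d)^[i+1] q) + C (cf 0) * q
        = ∑ j ∈ Finset.range (n+2), C (cf j) * (lapPoly d)^[j] q := by
      rw [Finset.sum_range_succ' (fun j => C (cf j) * (lapPoly d)^[j] q) (n+1)]
      norm_num
    rw [h1, Finset.sum_range_succ, hvanish, Spoly]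
    simp
  calc Spoly d (n+1) (X l * q)
      = ∑ i ∈ Finset.range (n+1), C (cf (i+1)) * (lapPoly d)^[i+1] (X l * q)
          + C (cf 0) * (X l * q) := by
        rw [Spoly, Finset.sum_range_succ', Function.iterate_zero_apply]
    _ = ∑ i ∈ Finset.range (n+1),
          (X l * (C (cf (i+1)) * (lapPoly d)^[i+1] q)
            - C (1/2:ℝ) * (C (cf i) * pderiv l ((lapPoly d)^[i] q)))
          + C (cf 0) * (X l * q) := by
        refine congrArg (· + _) (Finset.sum_congr rfl fun i _ => ?_)
        have hc : (C (cf (i+1)) : MvPolynomial (Fin d) ℝ) * C (2 * ((i:ℝ)+1))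
            = C (-(1/2:ℝ)) * C (cf i) := by rw [← C_mul, cf_succ, C_mul]
        have hcneg : (C (-(1/2:ℝ)) : MvPolynomial (Fin d) ℝ) = -C (1/2:ℝ) := by
          rw [map_neg]
        calc C (cf (i+1)) * (lapPoly d)^[i+1] (X l * q)
            = X l * (C (cf (i+1)) * (lapPoly d)^[i+1] q)
              + (C (cf (i+1)) * C (2 * ((i:ℝ)+1))) * pderiv l ((lapPoly d)^[i] q) := by
              rw [lapPoly_iter_X_mul]; ring
          _ = _ := by rw [hc, hcneg]; ring
    _ = X l * Spoly d n q - C (1/2:ℝ) * pderiv l (Spoly d n q) := by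
        rw [pderiv_Spoly, ← hsum1, Finset.sum_sub_distrib, mul_add,
          Finset.mul_sum, Finset.mul_sum]
        ring

theorem Tpow_zero (q : MvPolynomial (Fin d) ℝ) : Tpow d 0 q = q := by
  rw [Tpow]
  induction (List.finRange d) with
  | nil => rfl
  | cons i tl ih =>
    rw [List.foldr_cons, show ((0 : Fin d →₀ ℕ) i) = 0 from rfl, Function.iterate_zero_apply, ih]

theorem monomial_succ (l : Fin d) (s' : Fin d →₀ ℕ) :
    (monomial (s' + Finsupp.single l 1) (1:ℝ)) = X l * monomial s' 1 := by
  rw [X, monomial_mul, one_mul, add_comm]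

theorem main_monomial : ∀ (n : ℕ) (s : Fin d →₀ ℕ), (s.sum fun _ e => e) = n →
    Tpow d s 1 = C ((-2:ℝ)^n) * Spoly d n (monomial s 1) := by
  intro n
  induction n with
  | zero =>
    intro s hs
    have hs0 : s = 0 := by
      ext i
      by_contra hi
      have hmem : i ∈ s.support := Finsupp.mem_support_iff.mpr hi
      have : 0 < s.sum fun _ e => e :=
        Finset.sum_pos' (fun _ _ => Nat.zero_le _) ⟨i, hmem, Nat.pos_of_ne_zero hi⟩
      omega
    subst hs0
    rw [Tpow_zero]
    simp [Spoly, cf_zero, monomial_zero']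
  | succ n ih =>
    intro s hs
    -- find l with s l ≠ 0
    have hex : ∃ l, s l ≠ 0 := by
      by_contra h
      push_neg at h
      have h0 : s = 0 := Finsupp.ext h
      rw [h0, Finsupp.sum_zero_index] at hs
      exact Nat.succ_ne_zero n hs.symm
    obtain ⟨l, hl⟩ := hex
    set s' := s - Finsupp.single l 1 with hs'
    have hsplit : s = s' + Finsupp.single l 1 := by
      rw [hs', tsub_add_cancel_of_le (Finsupp.single_le_iff.mpr (Nat.one_le_iff_ne_zero.mpr hl))]
    have hs'sum : (s'.sum fun _ e => e) = n := by
      have := sum_sub_single s l hl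
      rw [hs'] ; omega
    have htd : (monomial s' (1:ℝ) : MvPolynomial (Fin d) ℝ).totalDegree ≤ n := by
      rw [totalDegree_monomial _ (one_ne_zero)] ; omega
    rw [hsplit, Tpow_add_single, ih s' hs'sum, monomial_succ,
      Spoly_X_mul n l (monomial s' 1) htd, Tl_eq]
    rw [pderiv_C_mul]
    have hpow : (C ((-2:ℝ)^(n+1)) : MvPolynomial (Fin d) ℝ)
        = C ((-2:ℝ)^n) * C (-2:ℝ) := by rw [← C_mul, ← pow_succ]
    rw [hpow]
    have hC2 : (C (-2:ℝ) : MvPolynomial (Fin d) ℝ) = -(2:MvPolynomial (Fin d) ℝ) := by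
      rw [map_neg, C_two]
    have h21 : (2:MvPolynomial (Fin d) ℝ) * C (1/2:ℝ) = 1 := by
      rw [← C_two, ← C_mul]; norm_num
    rw [hC2]
    linear_combination (-(C ((-2:ℝ)^n) * pderiv l (Spoly d n (monomial s' (1:ℝ))))) * h21

theorem pd_iter (l : Fin d) (n : ℕ) (q : MvPolynomial (Fin d) ℝ) :
    (pd d l)^[n] (Econj d (wP d) q) = Econj d (wP d) ((Tl d l)^[n] q) := by
  induction n generalizing q with
  | zero => rfl
  | succ n ih =>
    rw [Function.iterate_succ_apply, Function.iterate_succ_apply, pd_Econj]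
    exact ih (pderiv l q + pderiv l (wP d) * q)

theorem Dmulti_conj (s : Fin d →₀ ℕ) (q : MvPolynomial (Fin d) ℝ) :
    Dmulti d s (Econj d (wP d) q) = Econj d (wP d) (Tpow d s q) := by
  rw [Dmulti, Tpow]
  induction (List.finRange d) with
  | nil => rfl
  | cons i tl ih => rw [List.foldr_cons, List.foldr_cons, ih, pd_iter]

theorem peval_wP (y : EuclideanSpace ℝ (Fin d)) : peval d (wP d) y = -‖y‖^2 := by
  have hn : ‖y‖^2 = ∑ l : Fin d, (y l)^2 := by
    rw [EuclideanSpace.norm_eq, Real.sq_sqrt (Finset.sum_nonneg fun i _ => sq_nonneg _)]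
    simp [Real.norm_eq_abs, sq_abs]
  simp [peval, wP, hn]

theorem exp_eq_Econj :
    (fun y : EuclideanSpace ℝ (Fin d) => Real.exp (-‖y‖^2)) = Econj d (wP d) 1 := by
  funext y
  rw [Econj, peval_wP]
  simp [peval]

theorem lap_iter_finset_sum (j : ℕ) {α : Type*} (t : Finset α)
    (g : α → MvPolynomial (Fin d) ℝ) :
    (lapPoly d)^[j] (∑ a ∈ t, g a) = ∑ a ∈ t, (lapPoly d)^[j] (g a) := by
  classical
  induction t using Finset.induction_on with
  | empty => simp [lapPoly_iter_zero]
  | insert a s hnot ih =>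
    rw [Finset.sum_insert hnot, Finset.sum_insert hnot, lapPoly_iter_add, ih]

theorem peval_Spoly (n : ℕ) (q : MvPolynomial (Fin d) ℝ) (x : EuclideanSpace ℝ (Fin d)) :
    peval d (Spoly d n q) x
      = ∑ j ∈ Finset.range (n+1), cf j * peval d ((lapPoly d)^[j] q) x := by
  simp [Spoly, peval]

theorem hermite_rodrigues (d m : ℕ) (p : MvPolynomial (Fin d) ℝ)
    (hp : p.IsHomogeneous m) :
    (∀ x : EuclideanSpace ℝ (Fin d),
        (-1 / 2 : ℝ) ^ m * Real.exp (‖x‖ ^ 2) *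
            polyOp d p (fun y => Real.exp (-‖y‖ ^ 2)) x =
          ∑ j ∈ range (m / 2 + 1),
            ((-1 : ℝ) ^ j / (2 ^ (2 * j) * (Nat.factorial j : ℝ))) *
              peval d ((lapPoly d)^[j] p) x) ∧
      (lapPoly d p = 0 → ∀ x : EuclideanSpace ℝ (Fin d),
        (-1 / 2 : ℝ) ^ m * Real.exp (‖x‖ ^ 2) *
            polyOp d p (fun y => Real.exp (-‖y‖ ^ 2)) x = peval d p x) := by
  have hdeg : ∀ s ∈ p.support, (s.sum fun _ e => e) = m := by
    intro s hs
    have h1 := hp (mem_support_iff.mp hs)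
    have h2 : (Finsupp.weight 1) s = s.sum fun _ e => e := by
      simp [Finsupp.weight_apply]
    rw [h2] at h1
    exact h1
  have main : ∀ x : EuclideanSpace ℝ (Fin d),
      (-1 / 2 : ℝ) ^ m * Real.exp (‖x‖ ^ 2) *
          polyOp d p (fun y => Real.exp (-‖y‖ ^ 2)) x =
        ∑ j ∈ range (m / 2 + 1),
          ((-1 : ℝ) ^ j / (2 ^ (2 * j) * (Nat.factorial j : ℝ))) *
            peval d ((lapPoly d)^[j] p) x := by
    intro x
    -- LHS computation
    have hcancel : Real.exp (‖x‖^2) * Real.exp (-‖x‖^2) = 1 := by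
      rw [← Real.exp_add]; simp
    have hLHS : (-1 / 2 : ℝ) ^ m * Real.exp (‖x‖ ^ 2) *
        polyOp d p (fun y => Real.exp (-‖y‖ ^ 2)) x
        = ∑ s ∈ p.support, p.coeff s * peval d (Spoly d m (monomial s 1)) x := by
      rw [polyOp]
      rw [show (fun y : EuclideanSpace ℝ (Fin d) => Real.exp (-‖y‖ ^ 2))
          = Econj d (wP d) 1 from exp_eq_Econj]
      rw [Finset.mul_sum]
      refine Finset.sum_congr rfl fun s hs => ?_
      rw [Dmulti_conj, main_monomial m s (hdeg s hs), Econj, peval_wP]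
      have hpc : peval d (C ((-2:ℝ)^m) * Spoly d m (monomial s 1)) x
          = (-2:ℝ)^m * peval d (Spoly d m (monomial s 1)) x := by
        simp [peval]
      rw [hpc]
      have hone : (-1/2 : ℝ)^m * ((-2:ℝ)^m) = 1 := by
        rw [← mul_pow]; norm_num
      calc (-1 / 2:ℝ) ^ m * Real.exp (‖x‖ ^ 2) *
            (p.coeff s * ((-2:ℝ)^m * peval d (Spoly d m (monomial s 1)) x
              * Real.exp (-‖x‖ ^ 2)))
          = ((-1/2:ℝ)^m * ((-2:ℝ)^m)) * (Real.exp (‖x‖^2) * Real.exp (-‖x‖^2))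
            * (p.coeff s * peval d (Spoly d m (monomial s 1)) x) := by ring
        _ = _ := by rw [hone, hcancel]; ring
    rw [hLHS]
    -- RHS computation
    have hmono : ∀ j : ℕ, peval d ((lapPoly d)^[j] p) x
        = ∑ s ∈ p.support, p.coeff s * peval d ((lapPoly d)^[j] (monomial s 1)) x := by
      intro j
      conv_lhs => rw [p.as_sum]
      rw [lap_iter_finset_sum]
      have : ∀ s ∈ p.support, (lapPoly d)^[j] (monomial s (p.coeff s))
          = C (p.coeff s) * (lapPoly d)^[j] (monomial s 1) := by
        intro s _
        rw [show (monomial s (p.coeff s) : MvPolynomial (Fin d) ℝ)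
            = C (p.coeff s) * monomial s 1 from by rw [C_mul_monomial, mul_one],
          lapPoly_iter_C_mul]
      rw [Finset.sum_congr rfl this]
      simp [peval]
    have hswap : ∑ j ∈ range (m / 2 + 1),
        ((-1 : ℝ) ^ j / (2 ^ (2 * j) * (Nat.factorial j : ℝ))) *
          peval d ((lapPoly d)^[j] p) x
      = ∑ s ∈ p.support, p.coeff s *
          ∑ j ∈ range (m / 2 + 1), cf j * peval d ((lapPoly d)^[j] (monomial s 1)) x := by
      rw [Finset.sum_congr rfl fun j _ => by rw [hmono j, Finset.mul_sum]]
      rw [Finset.sum_comm]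
      refine Finset.sum_congr rfl fun s _ => ?_
      rw [Finset.mul_sum]
      exact Finset.sum_congr rfl fun j _ => by rw [cf]; ring
    rw [hswap]
    refine Finset.sum_congr rfl fun s hs => ?_
    congr 1
    rw [peval_Spoly]
    refine (Finset.sum_subset (Finset.range_subset_range.mpr (by omega)) fun j _ hj => ?_).symm
    have hjm : m < 2 * j := by
      rw [Finset.mem_range, not_lt] at hj
      omega
    rw [lap_iter_vanish j (monomial s 1)
      (by rw [totalDegree_monomial _ (one_ne_zero)]; rw [hdeg s hs]; exact hjm)]
    simp [peval]
  refine ⟨main, fun hharm x => ?_⟩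
  rw [main x]
  rw [Finset.sum_eq_single_of_mem 0 (Finset.mem_range.mpr (Nat.succ_pos _))]
  · simp
  · intro j _ hj
    obtain ⟨i, rfl⟩ := Nat.exists_eq_succ_of_ne_zero hj
    rw [Function.iterate_succ_apply, hharm, lapPoly_iter_zero]
    simp [peval]
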